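/- Under the random-intercept crossed effects design with exactly K = 2 factors and p − 1 = G_1 + G_2 ≥ 3, with T, τ, Q, Q̄, μ̄_1 ≤ ⋯ ≤ μ̄_p and ν̄_1 ≤ ⋯ ≤ ν̄_{p−1} as above, one has μ̄_{p−2} · (1 − ν̄_{p−2}) ≤ μ̄_3 · (1 + ν̄_{p−2}); i.e., κ_{3,p−2}(Q̄) ≤ (1 + ν̄_{p−2})/(1 − ν̄_{p−2}) whenever ν̄_{p−2} < 1. -/

import Mathlib

open Matrix

namespace Crossed2

/-- Coordinates for `K = 2` factors: `none` is the intercept `θ₀`, `some ⟨k, a⟩` is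
level `a` of factor `k ∈ {1, 2}`. -/
abbrev Idx (G : Fin 2 → ℕ) := Option (Σ k : Fin 2, Fin (G k))

/-- Coordinates of the random effects only. -/
abbrev Lvl (G : Fin 2 → ℕ) := Σ k : Fin 2, Fin (G k)

/-- The design matrix `V ∈ ℝ^{N×p}`. -/
noncomputable def V (N : ℕ) (G : Fin 2 → ℕ) (g : Fin N → ∀ k : Fin 2, Fin (G k)) :
    Matrix (Fin N) (Idx G) ℝ :=
  fun i c => c.elim 1 (fun s => if g i s.1 = s.2 then 1 else 0)

/-- `U = Vᵀ V`. -/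
noncomputable def U (N : ℕ) (G : Fin 2 → ℕ) (g : Fin N → ∀ k : Fin 2, Fin (G k)) :
    Matrix (Idx G) (Idx G) ℝ :=
  (V N G g)ᵀ * V N G g

/-- The posterior precision matrix `Q = T + τ U` (`T` diagonal). -/
noncomputable def Q (N : ℕ) (G : Fin 2 → ℕ) (g : Fin N → ∀ k : Fin 2, Fin (G k))
    (T0 : ℝ) (Tv : Fin 2 → ℝ) (τ : ℝ) : Matrix (Idx G) (Idx G) ℝ :=
  diagonal (fun c => c.elim T0 (fun s => Tv s.1)) + τ • U N G g

/-- The Jacobi preconditioned matrix `Q̄ = Diag(Q)^{−1/2} Q Diag(Q)^{−1/2}`. -/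
noncomputable def Qbar (N : ℕ) (G : Fin 2 → ℕ) (g : Fin N → ∀ k : Fin 2, Fin (G k))
    (T0 : ℝ) (Tv : Fin 2 → ℝ) (τ : ℝ) : Matrix (Idx G) (Idx G) ℝ :=
  diagonal (fun c => (Real.sqrt (Q N G g T0 Tv τ c c))⁻¹) * Q N G g T0 Tv τ *
    diagonal (fun c => (Real.sqrt (Q N G g T0 Tv τ c c))⁻¹)

/-- The restricted design matrix `V^(r)`. -/
noncomputable def Vr (N : ℕ) (G : Fin 2 → ℕ) (g : Fin N → ∀ k : Fin 2, Fin (G k)) :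
    Matrix (Fin N) (Lvl G) ℝ :=
  fun i s => if g i s.1 = s.2 then 1 else 0

/-- `U^(r) = (V^(r))ᵀ V^(r)`. -/
noncomputable def Ur (N : ℕ) (G : Fin 2 → ℕ) (g : Fin N → ∀ k : Fin 2, Fin (G k)) :
    Matrix (Lvl G) (Lvl G) ℝ :=
  (Vr N G g)ᵀ * Vr N G g

/-- `A^(r) = U^(r) − Diag(U^(r))`. -/
noncomputable def Ar (N : ℕ) (G : Fin 2 → ℕ) (g : Fin N → ∀ k : Fin 2, Fin (G k)) :
    Matrix (Lvl G) (Lvl G) ℝ :=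
  Ur N G g - diagonal (fun c => Ur N G g c c)

/-- `Ā^(r) = (D^(r))^{−1/2} A^(r) (D^(r))^{−1/2}` with `D^(r) = (K−1)·Diag(U^(r))
= Diag(U^(r))` since `K = 2`. -/
noncomputable def Abar (N : ℕ) (G : Fin 2 → ℕ) (g : Fin N → ∀ k : Fin 2, Fin (G k)) :
    Matrix (Lvl G) (Lvl G) ℝ :=
  diagonal (fun c => (Real.sqrt (Ur N G g c c))⁻¹) * Ar N G g *
    diagonal (fun c => (Real.sqrt (Ur N G g c c))⁻¹)


section SpectralHelpers

open Finset Module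
open scoped RealInnerProductSpace

variable {n : Type*} [Fintype n] [DecidableEq n]

omit [DecidableEq n] in
lemma inner_eq_sum' (x y : EuclideanSpace ℝ n) : ⟪x, y⟫ = ∑ i, x i * y i := by
  simp [PiLp.inner_apply, RCLike.inner_apply]
  exact Finset.sum_congr rfl fun _ _ => mul_comm _ _

omit [DecidableEq n] in
lemma dot_eq_inner' (x y : EuclideanSpace ℝ n) : x ⬝ᵥ y = ⟪x, y⟫ := by
  simp [dotProduct, inner_eq_sum']

lemma form_eq' {M : Matrix n n ℝ} (hM : M.IsHermitian) (x : EuclideanSpace ℝ n) :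
    x ⬝ᵥ M *ᵥ x = ∑ c, hM.eigenvalues c * (⟪hM.eigenvectorBasis c, x⟫)^2 := by
  have hsym : ∀ d e, M d e = M e d := fun d e => by
    have := congrFun (congrFun hM.eq d) e
    simpa [Matrix.conjTranspose_apply] using this.symm
  have key : ∀ c, ⟪(hM.eigenvectorBasis c : EuclideanSpace ℝ n), (WithLp.toLp 2 (M *ᵥ x) : EuclideanSpace ℝ n)⟫
      = hM.eigenvalues c * ⟪hM.eigenvectorBasis c, x⟫ := by
    intro c
    have hbe : ∀ e, (∑ d, M e d * (hM.eigenvectorBasis c) d)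
        = hM.eigenvalues c * (hM.eigenvectorBasis c) e := fun e => by
      have := congrFun (hM.mulVec_eigenvectorBasis c) e
      simpa [Matrix.mulVec, dotProduct] using this
    rw [inner_eq_sum', inner_eq_sum']
    calc ∑ d, (hM.eigenvectorBasis c) d * (M *ᵥ x) d
        = ∑ d, ∑ e, (hM.eigenvectorBasis c) d * (M d e * x e) := by
          refine Finset.sum_congr rfl fun d _ => ?_
          rw [Matrix.mulVec, dotProduct, Finset.mul_sum]
      _ = ∑ e, (∑ d, M e d * (hM.eigenvectorBasis c) d) * x e := by
          rw [Finset.sum_comm]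
          refine Finset.sum_congr rfl fun e _ => ?_
          rw [Finset.sum_mul]
          exact Finset.sum_congr rfl fun d _ => by rw [hsym d e]; ring
      _ = ∑ e, (hM.eigenvalues c * (hM.eigenvectorBasis c) e) * x e := by
          refine Finset.sum_congr rfl fun e _ => by rw [hbe e]
      _ = hM.eigenvalues c * ∑ e, (hM.eigenvectorBasis c) e * x e := by
          rw [Finset.mul_sum]; exact Finset.sum_congr rfl fun e _ => by ring
  have expand := (hM.eigenvectorBasis.sum_inner_mul_inner x (WithLp.toLp 2 (M *ᵥ x))).symm
  rw [show x ⬝ᵥ M *ᵥ x = ⟪x, WithLp.toLp 2 (M *ᵥ x)⟫ from dot_eq_inner' x (WithLp.toLp 2 (M *ᵥ x)), expand]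
  refine Finset.sum_congr rfl fun c _ => ?_
  rw [key c, real_inner_comm]
  ring

omit [DecidableEq n] in
lemma normsq_eq' (B : OrthonormalBasis n ℝ (EuclideanSpace ℝ n)) (x : EuclideanSpace ℝ n) :
    x ⬝ᵥ x = ∑ c, (⟪B c, x⟫)^2 := by
  rw [dot_eq_inner', ← B.sum_inner_mul_inner x x]
  refine Finset.sum_congr rfl fun c _ => ?_
  rw [real_inner_comm]; ring

lemma keyLemma' {M : Matrix n n ℝ} (hM : M.IsHermitian) (S : Finset n)
    (W : Submodule ℝ (EuclideanSpace ℝ n))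
    (hcard : Fintype.card n < S.card + finrank ℝ W) :
    ∃ x : EuclideanSpace ℝ n, x ≠ 0 ∧ x ∈ W ∧
      ∀ d ∉ S, ⟪hM.eigenvectorBasis d, x⟫ = 0 := by
  classical
  set B := hM.eigenvectorBasis with hB
  set T : Finset n := Sᶜ with hT
  have hON : Orthonormal ℝ (fun t : T => B t) :=
    B.orthonormal.comp _ Subtype.val_injective
  have hrange : Set.range (fun t : T => B t) = B '' (T : Set n) := by
    ext y; simp
  have hspan_rank : finrank ℝ (Submodule.span ℝ (B '' (T : Set n))) = T.card := by
    rw [← hrange, finrank_span_eq_card hON.linearIndependent, Fintype.card_coe]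
  set W2 : Submodule ℝ (EuclideanSpace ℝ n) := (Submodule.span ℝ (B '' (T : Set n)))ᗮ with hW2
  have horth : T.card + finrank ℝ W2 = Fintype.card n := by
    rw [hW2, ← hspan_rank]
    simpa [finrank_euclideanSpace] using Submodule.finrank_add_finrank_orthogonal
      (K := Submodule.span ℝ (B '' (T : Set n)))
  have hTcard : T.card = Fintype.card n - S.card := Finset.card_compl S
  have hScard : S.card ≤ Fintype.card n := Finset.card_le_univ S
  have hsum := Submodule.finrank_sup_add_finrank_inf_eq W W2
  have hle : finrank ℝ (W ⊔ W2 : Submodule ℝ (EuclideanSpace ℝ n)) ≤ Fintype.card n := by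
    have := Submodule.finrank_le (W ⊔ W2)
    rwa [finrank_euclideanSpace] at this
  have hpos : 0 < finrank ℝ (W ⊓ W2 : Submodule ℝ (EuclideanSpace ℝ n)) := by omega
  have hne : (W ⊓ W2 : Submodule ℝ (EuclideanSpace ℝ n)) ≠ ⊥ := by
    intro h
    rw [h, finrank_bot] at hpos
    exact lt_irrefl 0 hpos
  obtain ⟨x, hx, hx0⟩ := Submodule.exists_mem_ne_zero_of_ne_bot hne
  refine ⟨x, hx0, hx.1, fun d hd => ?_⟩
  have hdT : B d ∈ Submodule.span ℝ (B '' (T : Set n)) :=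
    Submodule.subset_span ⟨d, by simpa [hT] using hd, rfl⟩
  exact (Submodule.mem_orthogonal _ _).1 hx.2 _ hdT

omit [DecidableEq n] in
lemma dot_self_pos' (x : n → ℝ) (hx : x ≠ 0) : 0 < x ⬝ᵥ x := by
  have hex : ∃ i, x i ≠ 0 := by
    by_contra h
    push_neg at h
    exact hx (funext h)
  obtain ⟨i, hi⟩ := hex
  refine Finset.sum_pos' (fun c _ => mul_self_nonneg _) ⟨i, Finset.mem_univ i, ?_⟩
  exact mul_self_pos.mpr hi

omit [DecidableEq n] in
lemma dot_form' (M : Matrix n n ℝ) (x : n → ℝ) :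
    x ⬝ᵥ M *ᵥ x = ∑ c, ∑ d, x c * M c d * x d := by
  simp [dotProduct, Matrix.mulVec, Finset.mul_sum, mul_assoc]

/-- linear map encoding the two linear constraints used below -/
noncomputable def constraintMap {α : Type*} [Fintype α] (w : α → ℝ) :
    EuclideanSpace ℝ (Option α) →ₗ[ℝ] ℝ × ℝ where
  toFun x := (x none, ∑ s, w s * x (some s))
  map_add' x y := by
    have : ∀ c, (x + y) c = x c + y c := fun c => rfl
    simp only [this, Prod.mk_add_mk, Prod.mk.injEq]
    constructor
    · trivial
    · rw [← Finset.sum_add_distrib]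
      exact Finset.sum_congr rfl fun s _ => by ring
  map_smul' r x := by
    have : ∀ c, (r • x) c = r * x c := fun c => rfl
    simp only [this, RingHom.id_apply, Prod.smul_mk, smul_eq_mul, Prod.mk.injEq]
    constructor
    · trivial
    · rw [Finset.mul_sum]
      exact Finset.sum_congr rfl fun s _ => by ring

lemma finrank_ker_constraintMap {α : Type*} [Fintype α] (w : α → ℝ) :
    Fintype.card α ≤ finrank ℝ (LinearMap.ker (constraintMap w)) + 1 := by
  have h1 := (constraintMap w).finrank_range_add_finrank_ker
  have h2 : finrank ℝ (LinearMap.range (constraintMap w)) ≤ 2 := by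
    have := Submodule.finrank_le (LinearMap.range (constraintMap w))
    simpa using this
  rw [finrank_euclideanSpace, Fintype.card_option] at h1
  omega

end SpectralHelpers

section Structural
open Finset
variable {N : ℕ} {G : Fin 2 → ℕ} {g : Fin N → ∀ k : Fin 2, Fin (G k)}
  {T0 : ℝ} {Tv : Fin 2 → ℝ} {τ : ℝ}

lemma Ur_apply (s t : Lvl G) :
    Ur N G g s t = ∑ i, (if g i s.1 = s.2 then (1:ℝ) else 0) *
      (if g i t.1 = t.2 then 1 else 0) := by
  simp [Ur, Vr, Matrix.mul_apply, Matrix.transpose_apply]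

lemma Ur_diag_nonneg (s : Lvl G) : 0 ≤ Ur N G g s s := by
  rw [Ur_apply]
  exact Finset.sum_nonneg fun i _ => by positivity

lemma Ur_diag_pos (hobs : ∀ (k : Fin 2) (a : Fin (G k)), ∃ i, g i k = a) (s : Lvl G) :
    0 < Ur N G g s s := by
  obtain ⟨i, hi⟩ := hobs s.1 s.2
  rw [Ur_apply]
  refine Finset.sum_pos' (fun i _ => by positivity) ⟨i, Finset.mem_univ i, by simp [hi]⟩

lemma U_some_some (s t : Lvl G) : U N G g (some s) (some t) = Ur N G g s t := by
  simp [U, V, Ur, Vr, Matrix.mul_apply, Matrix.transpose_apply]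

lemma U_none_none : U N G g none none = N := by
  simp [U, V, Matrix.mul_apply, Matrix.transpose_apply]

lemma Q_diag_pos (hobs : ∀ (k : Fin 2) (a : Fin (G k)), ∃ i, g i k = a)
    (hT0 : 0 ≤ T0) (hTv : ∀ k, 0 ≤ Tv k) (hτ : 0 < τ) (hN : 1 ≤ N) (c : Idx G) :
    0 < Q N G g T0 Tv τ c c := by
  have hU : 0 < U N G g c c := by
    cases c with
    | none => rw [U_none_none]; exact_mod_cast Nat.lt_of_lt_of_le Nat.zero_lt_one hN
    | some s => rw [U_some_some]; exact Ur_diag_pos hobs s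
  have hd : 0 ≤ (c.elim T0 (fun s => Tv s.1) : ℝ) := by
    cases c with
    | none => exact hT0
    | some s => exact hTv s.1
  simp only [Q, Matrix.add_apply, Matrix.diagonal_apply_eq, Matrix.smul_apply, smul_eq_mul]
  nlinarith

lemma Qbar_apply (c d : Idx G) :
    Qbar N G g T0 Tv τ c d = (Real.sqrt (Q N G g T0 Tv τ c c))⁻¹ *
      Q N G g T0 Tv τ c d * (Real.sqrt (Q N G g T0 Tv τ d d))⁻¹ := by
  simp [Qbar, Matrix.mul_apply, Matrix.diagonal_apply, Finset.sum_ite_eq, Finset.sum_ite_eq']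

lemma Abar_apply (s t : Lvl G) :
    Abar N G g s t = (Real.sqrt (Ur N G g s s))⁻¹ *
      Ar N G g s t * (Real.sqrt (Ur N G g t t))⁻¹ := by
  simp [Abar, Matrix.mul_apply, Matrix.diagonal_apply, Finset.sum_ite_eq, Finset.sum_ite_eq']

lemma Qbar_diag (hobs : ∀ (k : Fin 2) (a : Fin (G k)), ∃ i, g i k = a)
    (hT0 : 0 ≤ T0) (hTv : ∀ k, 0 ≤ Tv k) (hτ : 0 < τ) (hN : 1 ≤ N) (c : Idx G) :
    Qbar N G g T0 Tv τ c c = 1 := by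
  have hq := Q_diag_pos (g := g) hobs hT0 hTv hτ hN c
  rw [Qbar_apply]
  rw [mul_comm, ← mul_assoc, ← mul_inv, Real.mul_self_sqrt hq.le]
  exact inv_mul_cancel₀ hq.ne'

lemma Abar_fst_eq (s t : Lvl G) (h : s.1 = t.1) : Abar N G g s t = 0 := by
  rw [Abar_apply]
  rcases eq_or_ne s t with rfl | hne
  · simp [Ar]
  · have hst : Ur N G g s t = 0 := by
      obtain ⟨k, a⟩ := s
      obtain ⟨k', b⟩ := t
      cases h
      have hab : a ≠ b := fun hc => hne (by rw [hc])
      rw [Ur_apply]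
      refine Finset.sum_eq_zero fun i _ => ?_
      rcases eq_or_ne (g i k) a with h1 | h1
      · have : g i k ≠ b := fun hc => hab (h1 ▸ hc ▸ rfl)
        simp [this]
      · simp [h1]
    have : Ar N G g s t = 0 := by
      simp [Ar, Matrix.diagonal_apply_ne _ hne, hst]
    simp [this]

lemma Q_some_some_ne (s t : Lvl G) (hne : s ≠ t) :
    Q N G g T0 Tv τ (some s) (some t) = τ * Ur N G g s t := by
  have : (some s : Idx G) ≠ some t := by simpa using hne
  simp [Q, Matrix.diagonal_apply_ne _ this, U_some_some]

lemma Ar_ne (s t : Lvl G) (hne : s ≠ t) : Ar N G g s t = Ur N G g s t := by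
  simp [Ar, Matrix.diagonal_apply_ne _ hne]

/-- scaling factors -/
noncomputable def ee (N : ℕ) (G : Fin 2 → ℕ) (g : Fin N → ∀ k : Fin 2, Fin (G k))
    (T0 : ℝ) (Tv : Fin 2 → ℝ) (τ : ℝ) (s : Lvl G) : ℝ :=
  Real.sqrt τ * Real.sqrt (Ur N G g s s) / Real.sqrt (Q N G g T0 Tv τ (some s) (some s))

lemma ee_sq_le_one (hobs : ∀ (k : Fin 2) (a : Fin (G k)), ∃ i, g i k = a)
    (hT0 : 0 ≤ T0) (hTv : ∀ k, 0 ≤ Tv k) (hτ : 0 < τ) (hN : 1 ≤ N) (s : Lvl G) :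
    ee N G g T0 Tv τ s ^ 2 ≤ 1 := by
  have hq := Q_diag_pos (g := g) hobs hT0 hTv hτ hN (some s)
  have hu := Ur_diag_pos (g := g) hobs s
  have hqu : τ * Ur N G g s s ≤ Q N G g T0 Tv τ (some s) (some s) := by
    simp only [Q, Matrix.add_apply, Matrix.diagonal_apply_eq, Matrix.smul_apply, smul_eq_mul,
      U_some_some]
    have := hTv s.1
    simp only [Option.elim]
    linarith
  rw [ee, div_pow, mul_pow, Real.sq_sqrt hτ.le, Real.sq_sqrt hu.le, Real.sq_sqrt hq.le]
  rw [div_le_one hq]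
  exact hqu

lemma Qbar_some_some_ne (hobs : ∀ (k : Fin 2) (a : Fin (G k)), ∃ i, g i k = a)
    (hT0 : 0 ≤ T0) (hTv : ∀ k, 0 ≤ Tv k) (hτ : 0 < τ) (hN : 1 ≤ N)
    (s t : Lvl G) (hne : s ≠ t) :
    Qbar N G g T0 Tv τ (some s) (some t)
      = ee N G g T0 Tv τ s * Abar N G g s t * ee N G g T0 Tv τ t := by
  have hqs := Q_diag_pos (g := g) hobs hT0 hTv hτ hN (some s)
  have hqt := Q_diag_pos (g := g) hobs hT0 hTv hτ hN (some t)
  have hus := Ur_diag_pos (g := g) hobs s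
  have hut := Ur_diag_pos (g := g) hobs t
  rw [Qbar_apply, Abar_apply, Ar_ne _ _ hne, Q_some_some_ne _ _ hne, ee, ee]
  have h1 : Real.sqrt τ * Real.sqrt τ = τ := Real.mul_self_sqrt hτ.le
  have h2 : Real.sqrt (Ur N G g s s) ≠ 0 := by positivity
  have h3 : Real.sqrt (Ur N G g t t) ≠ 0 := by positivity
  have h4 : Real.sqrt (Q N G g T0 Tv τ (some s) (some s)) ≠ 0 := by positivity
  have h5 : Real.sqrt (Q N G g T0 Tv τ (some t) (some t)) ≠ 0 := by positivity
  field_simp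
  ring_nf
  rw [Real.sq_sqrt hτ.le]
  ring


lemma dot_form {n : Type*} [Fintype n] (M : Matrix n n ℝ) (x : n → ℝ) :
    x ⬝ᵥ M *ᵥ x = ∑ c, ∑ d, x c * M c d * x d := by
  simp [dotProduct, mulVec, Finset.mul_sum, mul_assoc]

lemma sgn_mul_sgn (a b : Fin 2) (hab : a ≠ b) :
    ((if a = 0 then (1:ℝ) else -1) * (if b = 0 then 1 else -1)) = -1 := by
  fin_cases a <;> fin_cases b <;> simp_all

lemma flip_form (y : Lvl G → ℝ) :
    y ⬝ᵥ Abar N G g *ᵥ y =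
      -((fun s => (if s.1 = 0 then (1:ℝ) else -1) * y s) ⬝ᵥ Abar N G g *ᵥ
        (fun s => (if s.1 = 0 then (1:ℝ) else -1) * y s)) := by
  rw [eq_neg_iff_add_eq_zero, dot_form, dot_form, ← Finset.sum_add_distrib]
  refine Finset.sum_eq_zero fun s _ => ?_
  rw [← Finset.sum_add_distrib]
  refine Finset.sum_eq_zero fun t _ => ?_
  rcases eq_or_ne s.1 t.1 with h | h
  · rw [Abar_fst_eq _ _ h]; ring
  · have h2 := sgn_mul_sgn s.1 t.1 h
    have h3 : (if s.1 = 0 then (1:ℝ) else -1) * y s * Abar N G g s t *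
        ((if t.1 = 0 then (1:ℝ) else -1) * y t) =
        ((if s.1 = 0 then (1:ℝ) else -1) * (if t.1 = 0 then (1:ℝ) else -1)) *
          (y s * Abar N G g s t * y t) := by ring
    rw [h3, h2]; ring

lemma flip_normsq (y : Lvl G → ℝ) :
    (fun s => (if s.1 = 0 then (1:ℝ) else -1) * y s) ⬝ᵥ
      (fun s => (if s.1 = 0 then (1:ℝ) else -1) * y s) = y ⬝ᵥ y := by
  simp only [dotProduct]
  refine Finset.sum_congr rfl fun s _ => ?_
  rcases eq_or_ne s.1 0 with h | h <;> simp [h] <;> ring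

lemma expansion (hobs : ∀ (k : Fin 2) (a : Fin (G k)), ∃ i, g i k = a)
    (hT0 : 0 ≤ T0) (hTv : ∀ k, 0 ≤ Tv k) (hτ : 0 < τ) (hN : 1 ≤ N)
    (x : Idx G → ℝ) (hx0 : x none = 0) :
    x ⬝ᵥ Qbar N G g T0 Tv τ *ᵥ x = x ⬝ᵥ x +
      (fun s => ee N G g T0 Tv τ s * x (some s)) ⬝ᵥ Abar N G g *ᵥ
        (fun s => ee N G g T0 Tv τ s * x (some s)) := by
  classical
  rw [dot_form, dot_form]
  have hxx : x ⬝ᵥ x = ∑ s : Lvl G, x (some s) ^ 2 := by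
    simp [dotProduct, Fintype.sum_option, hx0, pow_two]
  rw [hxx]
  calc ∑ c, ∑ d, x c * Qbar N G g T0 Tv τ c d * x d
      = ∑ s : Lvl G, ∑ t : Lvl G,
          x (some s) * Qbar N G g T0 Tv τ (some s) (some t) * x (some t) := by
        rw [Fintype.sum_option]
        simp only [hx0, zero_mul, mul_zero, Finset.sum_const_zero, zero_add]
        refine Finset.sum_congr rfl fun s _ => ?_
        rw [Fintype.sum_option]
        simp [hx0]
    _ = ∑ s : Lvl G, ∑ t : Lvl G, ((if s = t then x (some s)^2 else 0) +
          (ee N G g T0 Tv τ s * x (some s)) * Abar N G g s t *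
            (ee N G g T0 Tv τ t * x (some t))) := by
        refine Finset.sum_congr rfl fun s _ => Finset.sum_congr rfl fun t _ => ?_
        rcases eq_or_ne s t with rfl | hne
        · rw [Qbar_diag hobs hT0 hTv hτ hN, Abar_fst_eq s s rfl]
          simp [pow_two]
        · rw [Qbar_some_some_ne hobs hT0 hTv hτ hN s t hne, if_neg hne]
          ring
    _ = (∑ s : Lvl G, x (some s) ^ 2) + ∑ s : Lvl G, ∑ t : Lvl G,
          (ee N G g T0 Tv τ s * x (some s)) * Abar N G g s t *
            (ee N G g T0 Tv τ t * x (some t)) := by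
        rw [← Finset.sum_add_distrib]
        refine Finset.sum_congr rfl fun s _ => ?_
        rw [Finset.sum_add_distrib, Finset.sum_ite_eq]
        simp

end Structural

section Structural2
open Finset
variable {N : ℕ} {G : Fin 2 → ℕ} {g : Fin N → ∀ k : Fin 2, Fin (G k)}

lemma dot_opt (x : Idx G → ℝ) (hx0 : x none = 0) :
    x ⬝ᵥ x = ∑ s : Lvl G, x (some s)^2 := by
  simp [dotProduct, Fintype.sum_option, hx0, pow_two]

end Structural2

open Finset Module
open scoped RealInnerProductSpace

set_option maxHeartbeats 1000000 in
/-- Corollary 3 of the paper (`K = 2`): `μ̄_{p−2}·(1 − ν̄_{p−2}) ≤ μ̄₃·(1 + ν̄_{p−2})`,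
i.e. `κ_{3,p−2}(Q̄) ≤ (1 + ν̄_{p−2})/(1 − ν̄_{p−2})` whenever `ν̄_{p−2} < 1`.
(Sorted eigenvalues: `μ̄_{p−2}` is `μ` at 0-based index `p−3`, `μ̄₃` at index `2`,
`ν̄_{p−2}` at 0-based index `(p−1)−2` of the `p−1` eigenvalues of `Ā^(r)`.) -/

theorem bipartite_condition_number_bound (N : ℕ) (G : Fin 2 → ℕ)
    (g : Fin N → ∀ k : Fin 2, Fin (G k))
    (hGk : ∀ k, 1 ≤ G k) (hN : 1 ≤ N)
    (hp : 3 ≤ ∑ k, G k)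
    (hobs : ∀ (k : Fin 2) (a : Fin (G k)), ∃ i, g i k = a)
    (T0 : ℝ) (Tv : Fin 2 → ℝ) (τ : ℝ)
    (hT0 : 0 ≤ T0) (hTv : ∀ k, 0 ≤ Tv k) (hτ : 0 < τ)
    (hQ : (Qbar N G g T0 Tv τ).IsHermitian)
    (μ : Fin (Fintype.card (Idx G)) → ℝ) (hμmono : Monotone μ)
    (eQ : Idx G ≃ Fin (Fintype.card (Idx G)))
    (hμ : ∀ c, hQ.eigenvalues c = μ (eQ c))
    (hA : (Abar N G g).IsHermitian)
    (ν : Fin (Fintype.card (Lvl G)) → ℝ) (hνmono : Monotone ν)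
    (eA : Lvl G ≃ Fin (Fintype.card (Lvl G)))
    (hν : ∀ c, hA.eigenvalues c = ν (eA c)) :
    ∀ (i j : Fin (Fintype.card (Idx G))) (b : Fin (Fintype.card (Lvl G))),
      (i : ℕ) = Fintype.card (Idx G) - 3 → (j : ℕ) = 2 →
      (b : ℕ) = Fintype.card (Lvl G) - 2 →
      μ i * (1 - ν b) ≤ μ j * (1 + ν b) := by
  classical
  intro i j b hi hj hb
  have hm : Fintype.card (Lvl G) = ∑ k, G k := by
    simp [Fintype.card_sigma]
  have hm3 : 3 ≤ Fintype.card (Lvl G) := by rw [hm]; exact hp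
  have hcardIdx : Fintype.card (Idx G) = Fintype.card (Lvl G) + 1 := by
    simp [Fintype.card_option]
  -- PSD of Qbar, hence μ nonneg
  have hVH : (V N G g)ᴴ = (V N G g)ᵀ := Matrix.conjTranspose_eq_transpose_of_trivial _
  have hUpsd : (U N G g).PosSemidef := by
    rw [U, ← hVH]; exact Matrix.posSemidef_conjTranspose_mul_self _
  have hsmul : (τ • U N G g).PosSemidef := by
    refine ⟨?_, fun x => ?_⟩
    · have hcs : (τ • U N G g)ᴴ = τ • (U N G g)ᴴ := by simp
      rw [Matrix.IsHermitian, hcs, hUpsd.1.eq]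
    · exact (hUpsd.smul hτ.le).2 x
  have hdiagpsd : (Matrix.diagonal (fun c : Idx G => c.elim T0 (fun s => Tv s.1))).PosSemidef := by
    refine Matrix.posSemidef_diagonal_iff.mpr fun c => ?_
    cases c with
    | none => exact hT0
    | some s => exact hTv s.1
  have hQpsd : (Q N G g T0 Tv τ).PosSemidef := hdiagpsd.add hsmul
  have hDh : (Matrix.diagonal (fun c => (Real.sqrt (Q N G g T0 Tv τ c c))⁻¹))ᴴ
      = Matrix.diagonal (fun c => (Real.sqrt (Q N G g T0 Tv τ c c))⁻¹) := by
    rw [Matrix.diagonal_conjTranspose]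
    simp [Pi.star_def]
  have hQbpsd : (Qbar N G g T0 Tv τ).PosSemidef := by
    rw [Qbar]
    nth_rewrite 1 [← hDh]
    exact hQpsd.conjTranspose_mul_mul_same _
  have hμnn : ∀ t : Fin (Fintype.card (Idx G)), 0 ≤ μ t := by
    intro t
    have h1 : 0 ≤ hQ.eigenvalues (eQ.symm t) := hQbpsd.eigenvalues_nonneg (eQ.symm t)
    rwa [hμ (eQ.symm t), Equiv.apply_symm_apply] at h1
  -- the top eigenvector of Abar
  have hm1 : Fintype.card (Lvl G) - 1 < Fintype.card (Lvl G) := by omega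
  set cstar : Lvl G := eA.symm ⟨Fintype.card (Lvl G) - 1, hm1⟩ with hcstar
  -- bound on the Abar-form for vectors orthogonal to the top eigenvector
  have EB : ∀ y : EuclideanSpace ℝ (Lvl G), ⟪hA.eigenvectorBasis cstar, y⟫ = 0 →
      y ⬝ᵥ Abar N G g *ᵥ y ≤ ν b * (y ⬝ᵥ y) := by
    intro y hy
    rw [form_eq' hA y, normsq_eq' hA.eigenvectorBasis y, Finset.mul_sum]
    refine Finset.sum_le_sum fun c _ => ?_
    by_cases hc : c = cstar
    · rw [hc, hy]
      simp
    · have h1 : (eA c : ℕ) < Fintype.card (Lvl G) := (eA c).2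
      have h2 : (eA c : ℕ) ≠ Fintype.card (Lvl G) - 1 := by
        intro hcc
        apply hc
        have h3 : eA c = ⟨Fintype.card (Lvl G) - 1, hm1⟩ := Fin.ext hcc
        rw [hcstar, ← h3, Equiv.symm_apply_apply]
      have h4 : ν (eA c) ≤ ν b := hνmono (by rw [Fin.le_def, hb]; omega)
      rw [hν c]
      exact mul_le_mul_of_nonneg_right h4 (sq_nonneg _)
  -- ν b is nonnegative
  obtain ⟨k0, hk0⟩ : ∃ k : Fin 2, 2 ≤ G k := by
    by_contra hcon
    push_neg at hcon
    have h0 := hcon 0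
    have h1 := hcon 1
    rw [Fin.sum_univ_two] at hp
    omega
  have hc1 : Fintype.card {s : Lvl G // s.1 = k0} = G k0 := by
    have e0 : {s : Lvl G // s.1 = k0} ≃ Fin (G k0) :=
      { toFun := fun s => Fin.cast (congrArg G s.2) s.1.2
        invFun := fun a => ⟨⟨k0, a⟩, rfl⟩
        left_inv := fun s => by
          rcases s with ⟨⟨k, a⟩, h⟩
          subst h
          rfl
        right_inv := fun a => rfl }
    rw [Fintype.card_congr e0, Fintype.card_fin]
  have hGk0m : G k0 ≤ Fintype.card (Lvl G) := by
    rw [← hc1]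
    exact Fintype.card_subtype_le _
  have hc2 : Fintype.card {s : Lvl G // s.1 ≠ k0} = Fintype.card (Lvl G) - G k0 := by
    have h := Fintype.card_subtype_compl (fun s : Lvl G => s.1 = k0)
    rw [hc1] at h
    exact h
  set L0 : EuclideanSpace ℝ (Lvl G) →ₗ[ℝ] ({s : Lvl G // s.1 ≠ k0} → ℝ) :=
    { toFun := fun y => fun st => y st.1
      map_add' := fun x y => rfl
      map_smul' := fun r x => rfl } with hL0
  have hW0 : G k0 ≤ finrank ℝ (LinearMap.ker L0) := by
    have h1 := L0.finrank_range_add_finrank_ker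
    have h2 : finrank ℝ (LinearMap.range L0) ≤ Fintype.card (Lvl G) - G k0 := by
      have h3 := Submodule.finrank_le (LinearMap.range L0)
      rwa [Module.finrank_pi, hc2] at h3
    rw [finrank_euclideanSpace] at h1
    omega
  set Sν : Finset (Lvl G) := Finset.univ.filter
    (fun s => (eA s : ℕ) ≤ Fintype.card (Lvl G) - 2) with hSν
  have hSνcard : Sν.card = Fintype.card (Lvl G) - 1 := by
    have he : Sν.card = (Finset.univ.filter
        (fun t : Fin (Fintype.card (Lvl G)) => (t:ℕ) ≤ Fintype.card (Lvl G) - 2)).card :=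
      Finset.card_equiv eA (by intro s; simp [hSν])
    have hIic : Finset.univ.filter
        (fun t : Fin (Fintype.card (Lvl G)) => (t:ℕ) ≤ Fintype.card (Lvl G) - 2)
        = Finset.Iic (⟨Fintype.card (Lvl G) - 2, by omega⟩ : Fin (Fintype.card (Lvl G))) := by
      ext t; simp [Fin.le_def]
    rw [he, hIic, Fin.card_Iic]
    show Fintype.card (Lvl G) - 2 + 1 = Fintype.card (Lvl G) - 1
    omega
  obtain ⟨y0, hy0ne, hy0mem, hy0coef⟩ := keyLemma' hA Sν (LinearMap.ker L0)
    (by rw [hSνcard]; omega)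
  have hy0prop : ∀ s : Lvl G, s.1 ≠ k0 → y0 s = 0 := by
    intro s hs
    have h := LinearMap.mem_ker.mp hy0mem
    exact congrFun h ⟨s, hs⟩
  have hform0 : y0 ⬝ᵥ Abar N G g *ᵥ y0 = 0 := by
    rw [dot_form']
    refine Finset.sum_eq_zero fun s _ => Finset.sum_eq_zero fun t _ => ?_
    by_cases hs : s.1 = k0
    · by_cases ht : t.1 = k0
      · rw [Abar_fst_eq s t (hs.trans ht.symm)]; ring
      · rw [hy0prop t ht]; ring
    · rw [hy0prop s hs]; ring
  have hνb0 : 0 ≤ ν b := by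
    have hle : y0 ⬝ᵥ Abar N G g *ᵥ y0 ≤ ν b * (y0 ⬝ᵥ y0) := by
      rw [form_eq' hA y0, normsq_eq' hA.eigenvectorBasis y0, Finset.mul_sum]
      refine Finset.sum_le_sum fun c _ => ?_
      by_cases hcS : c ∈ Sν
      · have h5 : (eA c : ℕ) ≤ Fintype.card (Lvl G) - 2 := by simpa [hSν] using hcS
        have h4 : ν (eA c) ≤ ν b := hνmono (by rw [Fin.le_def, hb]; omega)
        rw [hν c]
        exact mul_le_mul_of_nonneg_right h4 (sq_nonneg _)
      · rw [hy0coef c hcS]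
        simp
    have hpos := dot_self_pos' y0 ((WithLp.ofLp_injective 2).ne hy0ne)
    rw [hform0] at hle
    exact not_lt.1 fun hneg => absurd hle (not_le.2 (mul_neg_of_neg_of_pos hneg hpos))
  rcases le_or_gt 1 (ν b) with hν1 | hν1
  · have h0i := hμnn i
    have h0j := hμnn j
    nlinarith
  -- upper bound : μ i ≤ 1 + ν b
  set S1 : Finset (Idx G) := Finset.univ.filter
    (fun c => Fintype.card (Idx G) - 3 ≤ (eQ c : ℕ)) with hS1
  have hS1card : S1.card = 3 := by
    have he : S1.card = (Finset.univ.filter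
        (fun t : Fin (Fintype.card (Idx G)) => Fintype.card (Idx G) - 3 ≤ (t:ℕ))).card :=
      Finset.card_equiv eQ (by intro c; simp [hS1])
    have hIci : Finset.univ.filter
        (fun t : Fin (Fintype.card (Idx G)) => Fintype.card (Idx G) - 3 ≤ (t:ℕ))
        = Finset.Ici (⟨Fintype.card (Idx G) - 3, by omega⟩ : Fin (Fintype.card (Idx G))) := by
      ext t; simp [Fin.le_def]
    rw [he, hIci, Fin.card_Ici]
    show Fintype.card (Idx G) - (Fintype.card (Idx G) - 3) = 3
    omega
  set w1 : Lvl G → ℝ := fun s => ee N G g T0 Tv τ s * hA.eigenvectorBasis cstar s with hw1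
  obtain ⟨x1, hx1ne, hx1mem, hx1coef⟩ := keyLemma' hQ S1 (LinearMap.ker (constraintMap w1))
    (by show Fintype.card (Idx G) < S1.card +
          finrank ℝ (LinearMap.ker (constraintMap w1))
        rw [hS1card, hcardIdx]
        have h : Fintype.card (Lvl G) ≤
            finrank ℝ (LinearMap.ker (constraintMap w1)) + 1 :=
          finrank_ker_constraintMap w1
        omega)
  have hx1none : x1 none = 0 ∧ ∑ s, w1 s * x1 (some s) = 0 := by
    have h := LinearMap.mem_ker.mp hx1mem
    exact ⟨congrArg Prod.fst h, congrArg Prod.snd h⟩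
  set y1 : EuclideanSpace ℝ (Lvl G) := WithLp.toLp 2 (fun s => ee N G g T0 Tv τ s * x1 (some s)) with hy1
  have hy1orth : ⟪hA.eigenvectorBasis cstar, y1⟫ = 0 := by
    rw [inner_eq_sum', ← hx1none.2]
    refine Finset.sum_congr rfl fun s _ => ?_
    simp only [hy1, hw1]
    ring
  have hAyle := EB y1 hy1orth
  have hy1norm : y1 ⬝ᵥ y1 ≤ x1 ⬝ᵥ x1 := by
    rw [dot_opt x1 hx1none.1]
    simp only [dotProduct, hy1]
    refine Finset.sum_le_sum fun s _ => ?_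
    have h1 := ee_sq_le_one (g := g) hobs hT0 hTv hτ hN s
    nlinarith [sq_nonneg (x1 (some s))]
  have hexp := expansion hobs hT0 hTv hτ hN x1 hx1none.1
  change _ = _ + y1.ofLp ⬝ᵥ Abar N G g *ᵥ y1.ofLp at hexp
  have hformub : x1 ⬝ᵥ Qbar N G g T0 Tv τ *ᵥ x1 ≤ (1 + ν b) * (x1 ⬝ᵥ x1) := by
    rw [hexp]
    have h6 : ν b * (y1 ⬝ᵥ y1) ≤ ν b * (x1 ⬝ᵥ x1) :=
      mul_le_mul_of_nonneg_left hy1norm hνb0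
    linarith [hAyle, h6]
  have hformlb : μ i * (x1 ⬝ᵥ x1) ≤ x1 ⬝ᵥ Qbar N G g T0 Tv τ *ᵥ x1 := by
    rw [form_eq' hQ x1, normsq_eq' hQ.eigenvectorBasis x1, Finset.mul_sum]
    refine Finset.sum_le_sum fun c _ => ?_
    by_cases hcS : c ∈ S1
    · have h5 : Fintype.card (Idx G) - 3 ≤ (eQ c : ℕ) := by simpa [hS1] using hcS
      have h4 : μ i ≤ μ (eQ c) := hμmono (by rw [Fin.le_def, hi]; omega)
      rw [hμ c]
      exact mul_le_mul_of_nonneg_right h4 (sq_nonneg _)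
    · rw [hx1coef c hcS]; simp
  have hub : μ i ≤ 1 + ν b := by
    have hpos := dot_self_pos' x1 ((WithLp.ofLp_injective 2).ne hx1ne)
    have := le_trans hformlb hformub
    exact le_of_mul_le_mul_right (by linarith [this]) hpos
  -- lower bound : 1 - ν b ≤ μ j
  have hm2 : (2:ℕ) < Fintype.card (Idx G) := by omega
  set S2 : Finset (Idx G) := Finset.univ.filter (fun c => (eQ c : ℕ) ≤ 2) with hS2
  have hS2card : S2.card = 3 := by
    have he : S2.card = (Finset.univ.filter
        (fun t : Fin (Fintype.card (Idx G)) => (t:ℕ) ≤ 2)).card :=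
      Finset.card_equiv eQ (by intro c; simp [hS2])
    have hIic : Finset.univ.filter (fun t : Fin (Fintype.card (Idx G)) => (t:ℕ) ≤ 2)
        = Finset.Iic (⟨2, hm2⟩ : Fin (Fintype.card (Idx G))) := by
      ext t; simp [Fin.le_def]
    rw [he, hIic, Fin.card_Iic]
  set w2 : Lvl G → ℝ := fun s => (if s.1 = 0 then (1:ℝ) else -1) *
    (ee N G g T0 Tv τ s * hA.eigenvectorBasis cstar s) with hw2
  obtain ⟨x2, hx2ne, hx2mem, hx2coef⟩ := keyLemma' hQ S2 (LinearMap.ker (constraintMap w2))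
    (by show Fintype.card (Idx G) < S2.card +
          finrank ℝ (LinearMap.ker (constraintMap w2))
        rw [hS2card, hcardIdx]
        have h : Fintype.card (Lvl G) ≤
            finrank ℝ (LinearMap.ker (constraintMap w2)) + 1 :=
          finrank_ker_constraintMap w2
        omega)
  have hx2none : x2 none = 0 ∧ ∑ s, w2 s * x2 (some s) = 0 := by
    have h := LinearMap.mem_ker.mp hx2mem
    exact ⟨congrArg Prod.fst h, congrArg Prod.snd h⟩
  set y2 : EuclideanSpace ℝ (Lvl G) := WithLp.toLp 2 (fun s => ee N G g T0 Tv τ s * x2 (some s)) with hy2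
  set Jy2 : EuclideanSpace ℝ (Lvl G) :=
    WithLp.toLp 2 (fun s => (if s.1 = 0 then (1:ℝ) else -1) * y2 s) with hJy2
  have hJorth : ⟪hA.eigenvectorBasis cstar, Jy2⟫ = 0 := by
    rw [inner_eq_sum', ← hx2none.2]
    refine Finset.sum_congr rfl fun s _ => ?_
    simp only [hJy2, hy2, hw2]
    ring
  have hflipA := EB Jy2 hJorth
  have hflip : y2 ⬝ᵥ Abar N G g *ᵥ y2 = -(Jy2 ⬝ᵥ Abar N G g *ᵥ Jy2) := by
    rw [hJy2]
    exact flip_form y2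
  have hflipnorm : Jy2 ⬝ᵥ Jy2 = y2 ⬝ᵥ y2 := by
    rw [hJy2]
    exact flip_normsq y2
  have hy2Age : -(ν b) * (y2 ⬝ᵥ y2) ≤ y2 ⬝ᵥ Abar N G g *ᵥ y2 := by
    rw [hflip]
    rw [hflipnorm] at hflipA
    linarith
  have hy2norm : y2 ⬝ᵥ y2 ≤ x2 ⬝ᵥ x2 := by
    rw [dot_opt x2 hx2none.1]
    simp only [dotProduct, hy2]
    refine Finset.sum_le_sum fun s _ => ?_
    have h1 := ee_sq_le_one (g := g) hobs hT0 hTv hτ hN s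
    nlinarith [sq_nonneg (x2 (some s))]
  have hexp2 := expansion hobs hT0 hTv hτ hN x2 hx2none.1
  change _ = _ + y2.ofLp ⬝ᵥ Abar N G g *ᵥ y2.ofLp at hexp2
  have hformlb2 : (1 - ν b) * (x2 ⬝ᵥ x2) ≤ x2 ⬝ᵥ Qbar N G g T0 Tv τ *ᵥ x2 := by
    rw [hexp2]
    have h6 : ν b * (y2 ⬝ᵥ y2) ≤ ν b * (x2 ⬝ᵥ x2) :=
      mul_le_mul_of_nonneg_left hy2norm hνb0
    linarith [hy2Age, h6]
  have hformub2 : x2 ⬝ᵥ Qbar N G g T0 Tv τ *ᵥ x2 ≤ μ j * (x2 ⬝ᵥ x2) := by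
    rw [form_eq' hQ x2, normsq_eq' hQ.eigenvectorBasis x2, Finset.mul_sum]
    refine Finset.sum_le_sum fun c _ => ?_
    by_cases hcS : c ∈ S2
    · have h5 : (eQ c : ℕ) ≤ 2 := by simpa [hS2] using hcS
      have h4 : μ (eQ c) ≤ μ j := hμmono (by rw [Fin.le_def, hj]; omega)
      rw [hμ c]
      exact mul_le_mul_of_nonneg_right h4 (sq_nonneg _)
    · rw [hx2coef c hcS]; simp
  have hlb : 1 - ν b ≤ μ j := by
    have hpos := dot_self_pos' x2 ((WithLp.ofLp_injective 2).ne hx2ne)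
    have := le_trans hformlb2 hformub2
    exact le_of_mul_le_mul_right (by linarith [this]) hpos
  have e1 : μ i * (1 - ν b) ≤ (1 + ν b) * (1 - ν b) :=
    mul_le_mul_of_nonneg_right hub (by linarith)
  have e2 : (1 - ν b) * (1 + ν b) ≤ μ j * (1 + ν b) :=
    mul_le_mul_of_nonneg_right hlb (by linarith)
  calc μ i * (1 - ν b) ≤ (1 + ν b) * (1 - ν b) := e1
    _ = (1 - ν b) * (1 + ν b) := by ring
    _ ≤ μ j * (1 + ν b) := e2

end Crossed2
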